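/- Let α be a finite type and let π_θ, π_old : α → ℝ be probability mass functions (i.e., nonnegative functions summing to 1). Define the total variation distance d_TV(π_θ, π_old) = (1/2)·Σ_{x ∈ α} |π_θ(x) − π_old(x)| and the concentration term η(π_θ) = 1 − Σ_{x ∈ α} π_θ(x)². Let A : α → ℝ be a function with |A(x)| ≤ A_max for all x ∈ α, where A_max ≥ 0. Then |Σ_{x ∈ α} π_θ(x)·A(x) − Σ_{x ∈ α} π_old(x)·π_θ(x)·A(x)| ≤ A_max·(η(π_θ) + 2·d_TV(π_θ, π_old)). -/
import Mathlib


theorem amended_is_approx_error_bound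
    {α : Type*} [Fintype α]
    (πθ πold : α → ℝ)
    (hθ_nonneg : ∀ x, 0 ≤ πθ x) (hθ_sum : ∑ x, πθ x = 1)
    (hold_nonneg : ∀ x, 0 ≤ πold x) (hold_sum : ∑ x, πold x = 1)
    (A : α → ℝ) (Amax : ℝ) (hAmax : 0 ≤ Amax)
    (hA : ∀ x, |A x| ≤ Amax) :
    |(∑ x, πθ x * A x) - ∑ x, πold x * πθ x * A x| ≤
      Amax * ((1 - ∑ x, (πθ x) ^ 2) + 2 * ((1 / 2) * ∑ x, |πθ x - πold x|)) := by
  have hle1 : ∀ x, πθ x ≤ 1 := by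
    intro x
    calc πθ x ≤ ∑ y, πθ y := Finset.single_le_sum (fun y _ => hθ_nonneg y) (Finset.mem_univ x)
    _ = 1 := hθ_sum
  have key : (∑ x, πθ x * A x) - ∑ x, πold x * πθ x * A x
      = (∑ x, πθ x * A x * (1 - πθ x)) + ∑ x, πθ x * A x * (πθ x - πold x) := by
    rw [← Finset.sum_add_distrib, ← Finset.sum_sub_distrib]
    congr 1; ext x; ring
  rw [key]
  have h1 : |∑ x, πθ x * A x * (1 - πθ x)| ≤ Amax * (1 - ∑ x, (πθ x) ^ 2) := by
    calc |∑ x, πθ x * A x * (1 - πθ x)| ≤ ∑ x, |πθ x * A x * (1 - πθ x)| :=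
          Finset.abs_sum_le_sum_abs _ _
      _ ≤ ∑ x, Amax * (πθ x * (1 - πθ x)) := by
          apply Finset.sum_le_sum; intro x _
          rw [abs_mul, abs_mul, abs_of_nonneg (hθ_nonneg x),
            abs_of_nonneg (by linarith [hle1 x] : (0:ℝ) ≤ 1 - πθ x)]
          nlinarith [mul_nonneg (sub_nonneg.2 (hA x))
            (mul_nonneg (hθ_nonneg x) (sub_nonneg.2 (hle1 x)))]
      _ = Amax * (1 - ∑ x, (πθ x) ^ 2) := by
          rw [← Finset.mul_sum]
          congr 1
          simp only [mul_sub, mul_one]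
          rw [Finset.sum_sub_distrib, hθ_sum]
          simp [sq]
  have h2 : |∑ x, πθ x * A x * (πθ x - πold x)| ≤ Amax * ∑ x, |πθ x - πold x| := by
    calc |∑ x, πθ x * A x * (πθ x - πold x)| ≤ ∑ x, |πθ x * A x * (πθ x - πold x)| :=
          Finset.abs_sum_le_sum_abs _ _
      _ ≤ ∑ x, Amax * |πθ x - πold x| := by
          apply Finset.sum_le_sum; intro x _
          rw [abs_mul, abs_mul, abs_of_nonneg (hθ_nonneg x)]
          have h : πθ x * |A x| ≤ Amax := by
            nlinarith [hA x, hθ_nonneg x, hle1 x, abs_nonneg (A x)]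
          exact mul_le_mul_of_nonneg_right h (abs_nonneg _)
      _ = Amax * ∑ x, |πθ x - πold x| := by rw [Finset.mul_sum]
  calc |(∑ x, πθ x * A x * (1 - πθ x)) + ∑ x, πθ x * A x * (πθ x - πold x)|
      ≤ |∑ x, πθ x * A x * (1 - πθ x)| + |∑ x, πθ x * A x * (πθ x - πold x)| := abs_add_le _ _
    _ ≤ Amax * (1 - ∑ x, (πθ x) ^ 2) + Amax * ∑ x, |πθ x - πold x| := add_le_add h1 h2
    _ = Amax * ((1 - ∑ x, (πθ x) ^ 2) + 2 * ((1 / 2) * ∑ x, |πθ x - πold x|)) := by ring
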